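/- Let q, a ∈ ℂ with |q| < 1 and |a| < 1. Then ∑_{n=1}^{∞} (q;q)_{n−1} a^n / ((1 − q^n)(a;q)_n) = ∑_{m=1}^{∞} m a^m / (1 − q^m), where both infinite series converge absolutely. -/

import Mathlib

open Finset

noncomputable def Complex.abs : AbsoluteValue ℂ ℝ where
  toFun z := ‖z‖
  map_mul' := norm_mul
  nonneg' := norm_nonneg
  eq_zero' _ := norm_eq_zero
  add_le' := norm_add_le

lemma Complex.norm_eq_abs (z : ℂ) : ‖z‖ = Complex.abs z := rfl

lemma Complex.abs_natCast (n : ℕ) : Complex.abs (n : ℂ) = n := by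
  show ‖(n : ℂ)‖ = n
  simp

/-- Finite q-Pochhammer symbol `(a;q)_n = ∏_{k=0}^{n-1} (1 - a q^k)`. -/
noncomputable def qPoch (q a : ℂ) (n : ℕ) : ℂ :=
  ∏ k ∈ Finset.range n, (1 - a * q ^ k)

/-- Infinite q-Pochhammer symbol `(a;q)_∞ = ∏_{k=0}^{∞} (1 - a q^k)`. -/
noncomputable def qPochInf (q a : ℂ) : ℂ :=
  ∏' k : ℕ, (1 - a * q ^ k)

/-- Gaussian (q-binomial) coefficient `[N choose n]_q`. -/
noncomputable def qBinom (q : ℂ) (N n : ℕ) : ℂ :=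
  qPoch q q N / (qPoch q q n * qPoch q q (N - n))

lemma one_sub_ne_zero' {z : ℂ} (h : Complex.abs z < 1) : (1 : ℂ) - z ≠ 0 := by
  intro h0
  have hz : z = 1 := by linear_combination -h0
  rw [hz] at h; simp at h

lemma abs_aq_lt {q a : ℂ} (hq : Complex.abs q < 1) (ha : Complex.abs a < 1) (k : ℕ) :
    Complex.abs (a * q ^ k) < 1 := by
  rw [map_mul, map_pow]
  calc Complex.abs a * Complex.abs q ^ k ≤ Complex.abs a * 1 := by
        have := pow_le_one₀ (Complex.abs.nonneg q) hq.le (n := k)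
        have := Complex.abs.nonneg a
        nlinarith [pow_nonneg (Complex.abs.nonneg q) k]
    _ < 1 := by simpa using ha

lemma one_sub_pow_ne {q : ℂ} (hq : Complex.abs q < 1) (n : ℕ) : (1 : ℂ) - q ^ (n + 1) ≠ 0 := by
  apply one_sub_ne_zero'
  rw [map_pow]
  exact pow_lt_one₀ (Complex.abs.nonneg q) hq n.succ_ne_zero

lemma qPoch_ne_zero {q a : ℂ} (hq : Complex.abs q < 1) (ha : Complex.abs a < 1) (n : ℕ) :
    qPoch q a n ≠ 0 := by
  rw [qPoch]
  exact Finset.prod_ne_zero_iff.2 fun k _ => one_sub_ne_zero' (abs_aq_lt hq ha k)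

lemma qPoch_zero' (q a : ℂ) : qPoch q a 0 = 1 := by simp [qPoch]

lemma qPoch_succ (q a : ℂ) (n : ℕ) : qPoch q a (n + 1) = qPoch q a n * (1 - a * q ^ n) :=
  Finset.prod_range_succ _ n

lemma qPochq_succ (q : ℂ) (n : ℕ) : qPoch q q (n + 1) = qPoch q q n * (1 - q ^ (n + 1)) := by
  rw [qPoch_succ]; ring

/-- Real comparison product `∏_{k<n} (1 - r^{k+1})`. -/
noncomputable def Rr (r : ℝ) (n : ℕ) : ℝ := ∏ k ∈ Finset.range n, (1 - r ^ (k + 1))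

lemma Rr_pos {r : ℝ} (hr0 : 0 ≤ r) (hr1 : r < 1) (n : ℕ) : 0 < Rr r n := by
  apply Finset.prod_pos
  intro k _
  have : r ^ (k + 1) < 1 := pow_lt_one₀ hr0 hr1 k.succ_ne_zero
  linarith

lemma Rr_succ (r : ℝ) (n : ℕ) : Rr r (n + 1) = Rr r n * (1 - r ^ (n + 1)) :=
  Finset.prod_range_succ _ n

lemma abs_qPoch_ge {q : ℂ} (hq : Complex.abs q < 1) (n : ℕ) :
    Rr (Complex.abs q) n ≤ Complex.abs (qPoch q q n) := by
  rw [qPoch, map_prod, Rr]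
  apply Finset.prod_le_prod
  · intro k _
    have : Complex.abs q ^ (k + 1) < 1 :=
      pow_lt_one₀ (Complex.abs.nonneg q) hq k.succ_ne_zero
    linarith
  · intro k _
    have h1 : Complex.abs (q * q ^ k) = Complex.abs q ^ (k + 1) := by
      rw [map_mul, map_pow]; ring
    calc 1 - Complex.abs q ^ (k + 1) = Complex.abs 1 - Complex.abs (q * q ^ k) := by
          rw [h1, map_one]
      _ ≤ Complex.abs (1 - q * q ^ k) := by
          simpa [Complex.norm_eq_abs] using norm_sub_norm_le (1 : ℂ) (q * q ^ k)

lemma abs_qPoch_le {q : ℂ} (hq : Complex.abs q < 1) (n : ℕ) :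
    Complex.abs (qPoch q q n) ≤ Real.exp (Complex.abs q / (1 - Complex.abs q)) := by
  set r := Complex.abs q with hr
  have hr0 : 0 ≤ r := Complex.abs.nonneg q
  rw [qPoch, map_prod]
  calc ∏ k ∈ Finset.range n, Complex.abs (1 - q * q ^ k)
      ≤ ∏ k ∈ Finset.range n, Real.exp (r ^ (k + 1)) := by
        apply Finset.prod_le_prod
        · intro k _; exact Complex.abs.nonneg _
        · intro k _
          calc Complex.abs (1 - q * q ^ k) ≤ Complex.abs 1 + Complex.abs (q * q ^ k) := by
                simpa [Complex.norm_eq_abs, sub_eq_add_neg] using norm_sub_le (1 : ℂ) (q * q ^ k)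
            _ = 1 + r ^ (k + 1) := by rw [map_one, map_mul, map_pow]; ring
            _ ≤ Real.exp (r ^ (k + 1)) := by
                have := Real.add_one_le_exp (r ^ (k + 1))
                linarith
    _ = Real.exp (∑ k ∈ Finset.range n, r ^ (k + 1)) := by rw [Real.exp_sum]
    _ ≤ Real.exp (r / (1 - r)) := by
        apply Real.exp_le_exp.2
        have hsum : ∑ k ∈ Finset.range n, r ^ (k + 1) = r * ∑ k ∈ Finset.range n, r ^ k := by
          rw [Finset.mul_sum]
          exact Finset.sum_congr rfl fun k _ => by ring
        rw [hsum, div_eq_mul_inv]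
        apply mul_le_mul_of_nonneg_left _ hr0
        calc ∑ k ∈ Finset.range n, r ^ k ≤ ∑' k : ℕ, r ^ k :=
              Summable.sum_le_tsum _ (fun k _ => pow_nonneg hr0 k) (summable_geometric_of_lt_one hr0 hq)
          _ = (1 - r)⁻¹ := tsum_geometric_of_lt_one hr0 hq

lemma summable_master {r s : ℝ} (hr0 : 0 ≤ r) (hr1 : r < 1) (hs0 : 0 ≤ s) (hs1 : s < 1) :
    Summable (fun k : ℕ => s ^ k / Rr r k) := by
  apply summable_of_ratio_norm_eventually_le (show (1 + s) / 2 < 1 by linarith)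
  have hc : (0 : ℝ) < (1 - s) / (1 + s) := div_pos (by linarith) (by linarith)
  have htend : Filter.Tendsto (fun k : ℕ => r ^ (k + 1)) Filter.atTop (nhds 0) :=
    (tendsto_pow_atTop_nhds_zero_of_lt_one hr0 hr1).comp (Filter.tendsto_add_atTop_nat 1)
  have hev : ∀ᶠ k in Filter.atTop, r ^ (k + 1) ≤ (1 - s) / (1 + s) :=
    htend.eventually (eventually_le_nhds hc)
  filter_upwards [hev] with k hk
  have hx1 : r ^ (k + 1) < 1 := pow_lt_one₀ hr0 hr1 k.succ_ne_zero
  have hk' : r ^ (k + 1) * (1 + s) ≤ 1 - s := by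
    rwa [← le_div_iff₀ (by linarith)]
  have hR : 0 < Rr r k := Rr_pos hr0 hr1 k
  have hR1 : 0 < Rr r (k + 1) := Rr_pos hr0 hr1 (k + 1)
  have hkey : s ≤ (1 + s) / 2 * (1 - r ^ (k + 1)) := by nlinarith [hk']
  rw [Real.norm_of_nonneg (by positivity), Real.norm_of_nonneg (by positivity),
    Rr_succ, pow_succ]
  rw [div_le_iff₀ (mul_pos hR (by linarith))]
  have h2 : (1 + s) / 2 * (s ^ k / Rr r k) * (Rr r k * (1 - r ^ (k + 1)))
      = s ^ k * ((1 + s) / 2 * (1 - r ^ (k + 1))) := by field_simp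
  rw [h2]
  have : s ^ k * s ≤ s ^ k * ((1 + s) / 2 * (1 - r ^ (k + 1))) :=
    mul_le_mul_of_nonneg_left hkey (pow_nonneg hs0 k)
  linarith

/-- Coefficients of the q-binomial series: `cc q n k = [n+k choose k]_q`. -/
noncomputable def cc (q : ℂ) (n k : ℕ) : ℂ := qPoch q q (n + k) / (qPoch q q n * qPoch q q k)

lemma cc_left_zero {q : ℂ} (hq : Complex.abs q < 1) (k : ℕ) : cc q 0 k = 1 := by
  rw [cc, qPoch_zero', zero_add, one_mul, div_self (qPoch_ne_zero hq hq k)]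

lemma cc_right_zero {q : ℂ} (hq : Complex.abs q < 1) (n : ℕ) : cc q n 0 = 1 := by
  rw [cc, qPoch_zero', add_zero, mul_one, div_self (qPoch_ne_zero hq hq n)]

lemma cc_pascal {q : ℂ} (hq : Complex.abs q < 1) (n k : ℕ) :
    cc q (n + 1) (k + 1) = cc q n (k + 1) + q ^ (n + 1) * cc q (n + 1) k := by
  have e1 : n + 1 + (k + 1) = (n + k + 1) + 1 := by ring
  have e2 : n + (k + 1) = n + k + 1 := by ring
  have e3 : n + 1 + k = n + k + 1 := by ring
  rw [cc, cc, cc, e1, e2, e3, qPochq_succ q (n + k + 1), qPochq_succ q n, qPochq_succ q k]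
  have h1 := qPoch_ne_zero hq hq n
  have h2 := qPoch_ne_zero hq hq k
  have h3 := qPoch_ne_zero hq hq (n + k + 1)
  have h4 : (1 : ℂ) - q ^ (n + 1) ≠ 0 := one_sub_pow_ne hq n
  have h5 : (1 : ℂ) - q ^ (k + 1) ≠ 0 := one_sub_pow_ne hq k
  field_simp
  ring

lemma cc_conv {q : ℂ} (hq : Complex.abs q < 1) (n k : ℕ) :
    cc q (n + 1) k = ∑ j ∈ Finset.range (k + 1), cc q n j * (q ^ (n + 1)) ^ (k - j) := by
  induction k with
  | zero => simp [cc_right_zero hq]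
  | succ k ih =>
    rw [Finset.sum_range_succ, Nat.sub_self, pow_zero, mul_one]
    have hstep : ∀ j ∈ Finset.range (k + 1),
        cc q n j * (q ^ (n + 1)) ^ (k + 1 - j)
          = q ^ (n + 1) * (cc q n j * (q ^ (n + 1)) ^ (k - j)) := by
      intro j hj
      have hj' : j ≤ k := Nat.lt_succ_iff.mp (Finset.mem_range.mp hj)
      rw [show k + 1 - j = (k - j) + 1 from by omega, pow_succ]
      ring
    rw [Finset.sum_congr rfl hstep, ← Finset.mul_sum, ← ih, cc_pascal hq]
    ring

lemma cc_norm_le {q : ℂ} (hq : Complex.abs q < 1) (n k : ℕ) :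
    ‖cc q n k‖ ≤ Real.exp (Complex.abs q / (1 - Complex.abs q))
      / (Rr (Complex.abs q) n * Rr (Complex.abs q) k) := by
  have hr0 : 0 ≤ Complex.abs q := Complex.abs.nonneg q
  have hRn := Rr_pos hr0 hq n
  have hRk := Rr_pos hr0 hq k
  rw [cc, norm_div, norm_mul, Complex.norm_eq_abs, Complex.norm_eq_abs, Complex.norm_eq_abs]
  apply div_le_div₀ (Real.exp_nonneg _) (abs_qPoch_le hq _) (by positivity)
  exact mul_le_mul (abs_qPoch_ge hq n) (abs_qPoch_ge hq k) hRk.le (Complex.abs.nonneg _)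

lemma summable_cc_norm {q : ℂ} (hq : Complex.abs q < 1) (n : ℕ) {z : ℂ}
    (hz : Complex.abs z < 1) :
    Summable (fun k : ℕ => ‖cc q n k * z ^ k‖) := by
  have hr0 : 0 ≤ Complex.abs q := Complex.abs.nonneg q
  have hz0 : 0 ≤ Complex.abs z := Complex.abs.nonneg z
  set B := Real.exp (Complex.abs q / (1 - Complex.abs q)) with hB
  have hbd : ∀ k : ℕ, ‖cc q n k * z ^ k‖
      ≤ (B / Rr (Complex.abs q) n) * (Complex.abs z ^ k / Rr (Complex.abs q) k) := by
    intro k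
    rw [norm_mul, norm_pow, Complex.norm_eq_abs]
    have h1 := cc_norm_le hq n k
    have hzk : (0:ℝ) ≤ Complex.abs z ^ k := by positivity
    calc ‖cc q n k‖ * Complex.abs z ^ k
        ≤ (B / (Rr (Complex.abs q) n * Rr (Complex.abs q) k)) * Complex.abs z ^ k :=
          mul_le_mul_of_nonneg_right h1 hzk
      _ = B / Rr (Complex.abs q) n * (Complex.abs z ^ k / Rr (Complex.abs q) k) := by
          have hn0 := (Rr_pos hr0 hq n).ne'
          have hk0 := (Rr_pos hr0 hq k).ne'
          field_simp
  exact Summable.of_nonneg_of_le (fun k => norm_nonneg _) hbd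
    ((summable_master hr0 hq hz0 hz).mul_left _)

lemma qbin_sum {q : ℂ} (hq : Complex.abs q < 1) (n : ℕ) {z : ℂ} (hz : Complex.abs z < 1) :
    qPoch q z (n + 1) * ∑' k : ℕ, cc q n k * z ^ k = 1 := by
  induction n with
  | zero =>
    have h1 : qPoch q z 1 = 1 - z := by rw [qPoch_succ, qPoch_zero', pow_zero, mul_one, one_mul]
    have h2 : (fun k : ℕ => cc q 0 k * z ^ k) = fun k : ℕ => z ^ k := by
      funext k; rw [cc_left_zero hq, one_mul]
    rw [h1, h2, tsum_geometric_of_norm_lt_one (by rwa [Complex.norm_eq_abs])]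
    exact mul_inv_cancel₀ (one_sub_ne_zero' hz)
  | succ n ih =>
    have hw : Complex.abs (q ^ (n + 1) * z) < 1 := by
      rw [map_mul, map_pow]
      calc Complex.abs q ^ (n + 1) * Complex.abs z ≤ 1 * Complex.abs z := by
            apply mul_le_mul_of_nonneg_right _ (Complex.abs.nonneg z)
            exact pow_le_one₀ (Complex.abs.nonneg q) hq.le
        _ < 1 := by simpa using hz
    have hf := summable_cc_norm hq n hz
    have hg : Summable (fun k : ℕ => ‖(q ^ (n + 1) * z) ^ k‖) := by
      simp only [norm_pow, Complex.norm_eq_abs]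
      exact summable_geometric_of_lt_one (Complex.abs.nonneg _) hw
    have key := tsum_mul_tsum_eq_tsum_sum_range_of_summable_norm hf hg
    have hinner : ∀ k : ℕ, ∑ j ∈ Finset.range (k + 1),
        (cc q n j * z ^ j) * (q ^ (n + 1) * z) ^ (k - j) = cc q (n + 1) k * z ^ k := by
      intro k
      rw [cc_conv hq n k, Finset.sum_mul]
      apply Finset.sum_congr rfl
      intro j hj
      have hj' : j ≤ k := Nat.lt_succ_iff.mp (Finset.mem_range.mp hj)
      rw [mul_pow, show z ^ k = z ^ j * z ^ (k - j) from by
        rw [← pow_add, Nat.add_sub_cancel' hj']]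
      ring
    simp only [hinner] at key
    have hgeo : ∑' k : ℕ, (q ^ (n + 1) * z) ^ k = (1 - q ^ (n + 1) * z)⁻¹ :=
      tsum_geometric_of_norm_lt_one (by rwa [Complex.norm_eq_abs])
    rw [← key, qPoch_succ q z (n + 1)]
    have hne : (1 : ℂ) - z * q ^ (n + 1) ≠ 0 := by
      apply one_sub_ne_zero'
      rwa [mul_comm (q ^ (n+1)) z] at hw
    calc qPoch q z (n + 1) * (1 - z * q ^ (n + 1)) *
          ((∑' k : ℕ, cc q n k * z ^ k) * ∑' k : ℕ, (q ^ (n + 1) * z) ^ k)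
        = (qPoch q z (n + 1) * ∑' k : ℕ, cc q n k * z ^ k) *
          ((1 - z * q ^ (n + 1)) * ∑' k : ℕ, (q ^ (n + 1) * z) ^ k) := by ring
      _ = 1 := by
          rw [ih, hgeo, one_mul, mul_comm z (q ^ (n+1)), mul_inv_cancel₀]
          rwa [mul_comm z (q ^ (n+1))] at hne

lemma sum_inv_qPoch {q : ℂ} (hq : Complex.abs q < 1) (M : ℕ) :
    ∑ i ∈ Finset.range (M + 1), q ^ i / qPoch q q i = (qPoch q q M)⁻¹ := by
  induction M with
  | zero => simp [qPoch_zero']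
  | succ M ih =>
    rw [Finset.sum_range_succ, ih, qPochq_succ]
    have h1 := qPoch_ne_zero hq hq M
    have h2 := one_sub_pow_ne hq M
    field_simp
    ring

lemma pas {q : ℂ} (hq : Complex.abs q < 1) (n k : ℕ) :
    qPoch q q (n + k + 2) / ((1 - q ^ (n + 1)) * qPoch q q (k + 1))
      = qPoch q q (n + k + 1) / ((1 - q ^ (n + 1)) * qPoch q q k)
        + q ^ (k + 1) * qPoch q q (n + k + 1) / qPoch q q (k + 1) := by
  have e1 : n + k + 2 = (n + k + 1) + 1 := by ring
  rw [e1, qPochq_succ q (n + k + 1), qPochq_succ q k]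
  have h1 := qPoch_ne_zero hq hq k
  have h2 := one_sub_pow_ne hq n
  have h3 := one_sub_pow_ne hq k
  field_simp
  ring

lemma Gident {q : ℂ} (hq : Complex.abs q < 1) (m : ℕ) :
    ∑ n ∈ Finset.range (m + 1),
        qPoch q q (m + 1) / ((1 - q ^ (n + 1)) * qPoch q q (m - n)) = (m + 1 : ℂ) := by
  induction m with
  | zero =>
    rw [Finset.sum_range_one, show (0:ℕ) - 0 = 0 from rfl, qPoch_zero', mul_one,
      qPochq_succ, qPoch_zero', one_mul, div_self (one_sub_pow_ne hq 0)]
    norm_num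
  | succ m ih =>
    rw [Finset.sum_range_succ]
    have hsplit : ∀ n ∈ Finset.range (m + 1),
        qPoch q q (m + 2) / ((1 - q ^ (n + 1)) * qPoch q q (m + 1 - n))
          = qPoch q q (m + 1) / ((1 - q ^ (n + 1)) * qPoch q q (m - n))
            + q ^ (m - n + 1) * qPoch q q (m + 1) / qPoch q q (m - n + 1) := by
      intro n hn
      have hnm : n ≤ m := Nat.lt_succ_iff.mp (Finset.mem_range.mp hn)
      have e1 : m + 2 = n + (m - n) + 2 := by omega
      have e2 : m + 1 = n + (m - n) + 1 := by omega
      have e3 : m + 1 - n = (m - n) + 1 := by omega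
      rw [e3, e1, e2]
      exact pas hq n (m - n)
    rw [Finset.sum_congr rfl hsplit, Finset.sum_add_distrib, ih]
    have hlast : qPoch q q (m + 2) / ((1 - q ^ (m + 1 + 1)) * qPoch q q (m + 1 - (m + 1)))
        = q ^ 0 * qPoch q q (m + 1) / qPoch q q 0 := by
      rw [Nat.sub_self, qPoch_zero', mul_one, pow_zero, one_mul, div_one]
      rw [show m + 2 = (m + 1) + 1 from rfl, qPochq_succ q (m + 1)]
      rw [mul_div_assoc, div_self (one_sub_pow_ne hq (m + 1)), mul_one]
    rw [hlast]
    have hre := Finset.sum_range_reflect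
      (fun j => q ^ (j + 1) * qPoch q q (m + 1) / qPoch q q (j + 1)) (m + 1)
    simp only [show ∀ n : ℕ, m + 1 - 1 - n = m - n from fun n => by omega] at hre
    rw [hre]
    have hfull : ∑ j ∈ Finset.range (m + 1), q ^ (j + 1) * qPoch q q (m + 1) / qPoch q q (j + 1)
          + q ^ 0 * qPoch q q (m + 1) / qPoch q q 0
        = qPoch q q (m + 1) * ∑ i ∈ Finset.range (m + 2), q ^ i / qPoch q q i := by
      rw [Finset.mul_sum, Finset.sum_range_succ' (fun i => qPoch q q (m+1) * (q ^ i / qPoch q q i))]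
      congr 1
      · apply Finset.sum_congr rfl; intro j _; ring
      · ring
    rw [add_assoc, hfull, sum_inv_qPoch hq (m + 1),
      mul_inv_cancel₀ (qPoch_ne_zero hq hq (m + 1))]
    push_cast
    ring

lemma tsum_prod_antidiag {F : ℕ × ℕ → ℂ} (hF : Summable F) :
    ∑' p : ℕ × ℕ, F p = ∑' m : ℕ, ∑ kl ∈ Finset.HasAntidiagonal.antidiagonal m, F kl := by
  conv_rhs => congr; ext; rw [← Finset.sum_finset_coe, ← tsum_fintype (L := .unconditional _)]
  rw [← Finset.HasAntidiagonal.sigmaAntidiagonalEquivProd.tsum_eq F]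
  exact Summable.tsum_sigma' (fun m => (hasSum_fintype _).summable)
    (Finset.HasAntidiagonal.sigmaAntidiagonalEquivProd.summable_iff.mpr hF)

set_option maxHeartbeats 1000000 in
theorem stmt_8 (q a : ℂ) (hq : ‖q‖ < 1) (ha : ‖a‖ < 1) :
    Summable (fun n : ℕ =>
        qPoch q q n * a ^ (n + 1) / ((1 - q ^ (n + 1)) * qPoch q a (n + 1))) ∧
    Summable (fun m : ℕ => ((m : ℂ) + 1) * a ^ (m + 1) / (1 - q ^ (m + 1))) ∧
    ∑' n : ℕ, qPoch q q n * a ^ (n + 1) / ((1 - q ^ (n + 1)) * qPoch q a (n + 1))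
      = ∑' m : ℕ, ((m : ℂ) + 1) * a ^ (m + 1) / (1 - q ^ (m + 1)) := by
  have hq : Complex.abs q < 1 := hq
  have ha : Complex.abs a < 1 := ha
  have hr0 : 0 ≤ Complex.abs q := Complex.abs.nonneg q
  have ha0 : 0 ≤ Complex.abs a := Complex.abs.nonneg a
  set r := Complex.abs q with hrdef
  set B := Real.exp (r / (1 - r)) with hBdef
  -- the double-indexed family
  set T : ℕ × ℕ → ℂ := fun p =>
    (qPoch q q (p.1 + p.2) / qPoch q q p.2) * a ^ (p.1 + p.2 + 1) / (1 - q ^ (p.1 + 1)) with hTdef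
  -- lower bound on |1 - q^(n+1)|
  have habs1q : ∀ n : ℕ, 1 - r ≤ Complex.abs (1 - q ^ (n + 1)) := by
    intro n
    have h1 : Complex.abs (q ^ (n + 1)) ≤ r := by
      rw [map_pow]
      exact pow_le_of_le_one hr0 hq.le n.succ_ne_zero
    calc 1 - r ≤ Complex.abs 1 - Complex.abs (q ^ (n + 1)) := by rw [map_one]; linarith
      _ ≤ Complex.abs (1 - q ^ (n + 1)) := by
          simpa [Complex.norm_eq_abs] using norm_sub_norm_le (1 : ℂ) (q ^ (n + 1))
  -- norm summability of T
  have hTnorm : Summable (fun p : ℕ × ℕ => ‖T p‖) := by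
    have hbd : ∀ p : ℕ × ℕ, ‖T p‖
        ≤ (B / (1 - r) * Complex.abs a * Complex.abs a ^ p.1)
          * (Complex.abs a ^ p.2 / Rr r p.2) := by
      rintro ⟨n, k⟩
      have hRk := Rr_pos hr0 hq k
      have h1q := habs1q n
      have h1qpos : (0:ℝ) < Complex.abs (1 - q ^ (n + 1)) := by linarith
      have hnum : Complex.abs (qPoch q q (n + k)) ≤ B := abs_qPoch_le hq (n + k)
      have hden : Rr r k ≤ Complex.abs (qPoch q q k) := abs_qPoch_ge hq k
      have habspow : ‖a ^ (n + k + 1)‖ = Complex.abs a ^ (n + k + 1) := by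
        rw [norm_pow, Complex.norm_eq_abs]
      have : ‖T (n, k)‖ = Complex.abs (qPoch q q (n + k)) / Complex.abs (qPoch q q k)
          * Complex.abs a ^ (n + k + 1) / Complex.abs (1 - q ^ (n + 1)) := by
        simp only [hTdef, norm_div, norm_mul, norm_pow, Complex.norm_eq_abs]
      rw [this]
      calc Complex.abs (qPoch q q (n + k)) / Complex.abs (qPoch q q k)
            * Complex.abs a ^ (n + k + 1) / Complex.abs (1 - q ^ (n + 1))
          ≤ B / Rr r k * Complex.abs a ^ (n + k + 1) / (1 - r) := by
            apply div_le_div₀ (by positivity) _ (by linarith) h1q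
            apply mul_le_mul_of_nonneg_right _ (by positivity)
            exact div_le_div₀ (Real.exp_nonneg _) hnum hRk hden
        _ = (B / (1 - r) * Complex.abs a * Complex.abs a ^ n)
            * (Complex.abs a ^ k / Rr r k) := by
            rw [pow_add, pow_add, pow_one]
            field_simp
    apply Summable.of_nonneg_of_le (fun p => norm_nonneg _) hbd
    have hf1 : Summable (fun n : ℕ => B / (1 - r) * Complex.abs a * Complex.abs a ^ n) :=
      (summable_geometric_of_lt_one ha0 ha).mul_left _
    have hg1 : Summable (fun k : ℕ => Complex.abs a ^ k / Rr r k) :=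
      summable_master hr0 hq ha0 ha
    have hf1' : ∀ n : ℕ, 0 ≤ B / (1 - r) * Complex.abs a * Complex.abs a ^ n := by
      intro n
      have hB0 : (0:ℝ) ≤ B := Real.exp_nonneg _
      have hr1 : (0:ℝ) < 1 - r := by linarith
      positivity
    have hg1' : ∀ k : ℕ, 0 ≤ Complex.abs a ^ k / Rr r k := by
      intro k
      have := Rr_pos hr0 hq k
      positivity
    exact Summable.mul_of_nonneg
      (f := fun n : ℕ => B / (1 - r) * Complex.abs a * Complex.abs a ^ n)
      (g := fun k : ℕ => Complex.abs a ^ k / Rr r k) hf1 hg1 hf1' hg1'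
  have hT : Summable T := hTnorm.of_norm
  -- each row sums to the corresponding term of the LHS
  have ht_eq : ∀ n : ℕ,
      qPoch q q n * a ^ (n + 1) / ((1 - q ^ (n + 1)) * qPoch q a (n + 1))
        = ∑' k : ℕ, T (n, k) := by
    intro n
    have hA := qPoch_ne_zero hq ha (n + 1)
    have hPn := qPoch_ne_zero hq hq n
    have h1q := one_sub_pow_ne hq n
    have hS : ∑' k : ℕ, cc q n k * a ^ k = (qPoch q a (n + 1))⁻¹ :=
      eq_inv_of_mul_eq_one_left (by rw [mul_comm]; exact qbin_sum hq n ha)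
    have hterm : ∀ k : ℕ, T (n, k)
        = (qPoch q q n * a ^ (n + 1) / (1 - q ^ (n + 1))) * (cc q n k * a ^ k) := by
      intro k
      simp only [hTdef, cc]
      have hPk := qPoch_ne_zero hq hq k
      field_simp
      ring
    calc qPoch q q n * a ^ (n + 1) / ((1 - q ^ (n + 1)) * qPoch q a (n + 1))
        = (qPoch q q n * a ^ (n + 1) / (1 - q ^ (n + 1))) * (qPoch q a (n + 1))⁻¹ := by
          field_simp
      _ = (qPoch q q n * a ^ (n + 1) / (1 - q ^ (n + 1))) * ∑' k : ℕ, cc q n k * a ^ k := by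
          rw [hS]
      _ = ∑' k : ℕ, (qPoch q q n * a ^ (n + 1) / (1 - q ^ (n + 1))) * (cc q n k * a ^ k) :=
          tsum_mul_left.symm
      _ = ∑' k : ℕ, T (n, k) := tsum_congr fun k => (hterm k).symm
  -- row-wise HasSum
  have hrow : ∀ n : ℕ, HasSum (fun k => T (n, k))
      (qPoch q q n * a ^ (n + 1) / ((1 - q ^ (n + 1)) * qPoch q a (n + 1))) := by
    intro n
    rw [ht_eq n]
    exact (hT.prod_factor n).hasSum
  have hLHS : HasSum (fun n : ℕ =>
      qPoch q q n * a ^ (n + 1) / ((1 - q ^ (n + 1)) * qPoch q a (n + 1)))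
      (∑' p : ℕ × ℕ, T p) := hT.hasSum.prod_fiberwise hrow
  -- RHS summability
  have h2 : Summable (fun m : ℕ => ((m : ℂ) + 1) * a ^ (m + 1) / (1 - q ^ (m + 1))) := by
    apply Summable.of_norm
    have hbd : ∀ m : ℕ, ‖((m : ℂ) + 1) * a ^ (m + 1) / (1 - q ^ (m + 1))‖
        ≤ (((m : ℝ) + 1) * Complex.abs a ^ m) * (Complex.abs a / (1 - r)) := by
      intro m
      rw [norm_div, norm_mul, norm_pow, Complex.norm_eq_abs, Complex.norm_eq_abs,
        Complex.norm_eq_abs]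
      have hnat : Complex.abs ((m : ℂ) + 1) = (m : ℝ) + 1 := by
        rw [show ((m : ℂ) + 1) = ((m + 1 : ℕ) : ℂ) from by push_cast; ring,
          Complex.abs_natCast]
        push_cast; ring
      rw [hnat]
      have h1q := habs1q m
      calc ((m : ℝ) + 1) * Complex.abs a ^ (m + 1) / Complex.abs (1 - q ^ (m + 1))
          ≤ ((m : ℝ) + 1) * Complex.abs a ^ (m + 1) / (1 - r) := by
            apply div_le_div_of_nonneg_left (by positivity) (by linarith) h1q
        _ = (((m : ℝ) + 1) * Complex.abs a ^ m) * (Complex.abs a / (1 - r)) := by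
            rw [pow_succ]
            field_simp
    apply Summable.of_nonneg_of_le (fun m => norm_nonneg _) hbd
    have hx : ‖Complex.abs a‖ < 1 := by rwa [Real.norm_eq_abs, abs_of_nonneg ha0]
    have h1 := summable_pow_mul_geometric_of_norm_lt_one (R := ℝ) 1 hx
    have hgeo := summable_geometric_of_lt_one ha0 ha
    have hs1 : Summable (fun m : ℕ => ((m : ℝ) + 1) * Complex.abs a ^ m) := by
      have := h1.add hgeo
      simpa [pow_one, add_mul] using this
    exact hs1.mul_right _
  refine ⟨hLHS.summable, h2, ?_⟩
  rw [hLHS.tsum_eq]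
  have hregroup : ∑' p : ℕ × ℕ, T p = ∑' m : ℕ, ∑ kl ∈ Finset.HasAntidiagonal.antidiagonal m, T kl :=
    tsum_prod_antidiag hT
  have hdiag : ∀ m : ℕ, ∑ kl ∈ Finset.HasAntidiagonal.antidiagonal m, T kl
      = ((m : ℂ) + 1) * a ^ (m + 1) / (1 - q ^ (m + 1)) := by
    intro m
    rw [Finset.Nat.sum_antidiagonal_eq_sum_range_succ_mk]
    have hterm : ∀ n ∈ Finset.range (m + 1), T (n, m - n)
        = (a ^ (m + 1) * qPoch q q m / qPoch q q (m + 1))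
          * (qPoch q q (m + 1) / ((1 - q ^ (n + 1)) * qPoch q q (m - n))) := by
      intro n hn
      have hnm : n ≤ m := Nat.lt_succ_iff.mp (Finset.mem_range.mp hn)
      have e1 : n + (m - n) = m := by omega
      simp only [hTdef]
      rw [e1]
      have hP1 := qPoch_ne_zero hq hq (m + 1)
      have hP2 := qPoch_ne_zero hq hq (m - n)
      have h1q := one_sub_pow_ne hq n
      field_simp
    rw [Finset.sum_congr rfl hterm, ← Finset.mul_sum, Gident hq m]
    have hPm := qPoch_ne_zero hq hq m
    have hPm1 := qPoch_ne_zero hq hq (m + 1)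
    have h1q := one_sub_pow_ne hq m
    rw [qPochq_succ q m]
    field_simp
  rw [hregroup]
  exact tsum_congr hdiag
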